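/- For every n ≥ 1 there exist finitely many unit vectors u₁, …, u_m ∈ Sⁿ⁻¹ such that the subgroup of the orthogonal group O(n) generated by the hyperplane reflections R_{u₁}, …, R_{u_m} (where R_u x = x − 2⟨x,u⟩u) is dense in O(n). -/

import Mathlib

open Set
open scoped RealInnerProductSpace

noncomputable section

abbrev Euc (n : ℕ) := EuclideanSpace ℝ (Fin n)

/-- The hyperplane reflection `R_u x = x − 2⟪x,u⟫u`, as a linear isometry of `ℝⁿ`:
reflection through the hyperplane `u^⊥`. -/
def hypReflection {n : ℕ} (u : Euc n) : Euc n ≃ₗᵢ[ℝ] Euc n :=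
  Submodule.reflection (ℝ ∙ u)ᗮ

namespace Stmt15Aux

open Real

variable {n : ℕ}

/-- standard basis vector -/
def ee (i : Fin n) : Euc n := EuclideanSpace.single i 1

lemma ee_apply (i j : Fin n) : ee i j = if j = i then 1 else 0 := by
  simp [ee, EuclideanSpace.single_apply]

lemma norm_ee (i : Fin n) : ‖ee i‖ = 1 := by
  simp [ee, EuclideanSpace.norm_single]

lemma inner_ee (i : Fin n) (x : Euc n) : ⟪ee i, x⟫ = x i := by
  simp [ee, EuclideanSpace.inner_single_left]

lemma coord_le_norm (x : Euc n) (i : Fin n) : |x i| ≤ ‖x‖ := by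
  have h := abs_real_inner_le_norm (ee i) x
  rwa [inner_ee, norm_ee, one_mul] at h

/-- formula for the reflection -/
lemma refl_apply {u : Euc n} (hu : ‖u‖ = 1) (x : Euc n) :
    hypReflection u x = x - (2 * ⟪u, x⟫) • u := by
  have h := Submodule.reflection_singleton_apply (𝕜 := ℝ) u x
  rw [hu] at h
  rw [hypReflection, Submodule.reflection_orthogonal_apply, h]
  rw [two_smul]
  push_cast
  rw [one_pow, div_one, two_mul]
  rw [add_smul]
  abel

lemma refl_coord {u : Euc n} (hu : ‖u‖ = 1) (x : Euc n) (l : Fin n) :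
    hypReflection u x l = x l - 2 * ⟪u, x⟫ * u l := by
  rw [refl_apply hu]
  simp [PiLp.sub_apply, PiLp.smul_apply]

/-- Lipschitz continuity of reflection in the unit vector. -/
lemma refl_lip {u v : Euc n} (hu : ‖u‖ = 1) (hv : ‖v‖ = 1) {x : Euc n} (hx : ‖x‖ ≤ 1) :
    ‖hypReflection u x - hypReflection v x‖ ≤ 4 * ‖u - v‖ := by
  rw [refl_apply hu, refl_apply hv]
  have key : (x - (2 * ⟪u, x⟫) • u) - (x - (2 * ⟪v, x⟫) • v)
      = (2 * ⟪v, x⟫) • (v - u) + (2 * ⟪v - u, x⟫) • u := by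
    rw [inner_sub_left]
    module
  rw [key]
  have h1 : ‖(2 * ⟪v, x⟫) • (v - u)‖ ≤ 2 * ‖v - u‖ := by
    rw [norm_smul]
    have : |⟪v, x⟫| ≤ 1 := by
      have := abs_real_inner_le_norm v x
      nlinarith [norm_nonneg x]
    rw [Real.norm_eq_abs, abs_mul, abs_two]
    nlinarith [norm_nonneg (v - u)]
  have h2 : ‖(2 * ⟪v - u, x⟫) • u‖ ≤ 2 * ‖v - u‖ := by
    rw [norm_smul, hu, mul_one, Real.norm_eq_abs, abs_mul, abs_two]
    have := abs_real_inner_le_norm (v - u) x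
    nlinarith [norm_nonneg (v - u), abs_nonneg (⟪v - u, x⟫)]
  have h3 : ‖v - u‖ = ‖u - v‖ := by rw [norm_sub_rev]
  calc ‖(2 * ⟪v, x⟫) • (v - u) + (2 * ⟪v - u, x⟫) • u‖
      ≤ ‖(2 * ⟪v, x⟫) • (v - u)‖ + ‖(2 * ⟪v - u, x⟫) • u‖ := norm_add_le _ _
    _ ≤ 4 * ‖u - v‖ := by rw [← h3]; linarith

/-- Conjugation of a reflection. -/
lemma refl_conj (g : Euc n ≃ₗᵢ[ℝ] Euc n) {u : Euc n} (hu : ‖u‖ = 1) (x : Euc n) :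
    hypReflection (g u) x = g (hypReflection u (g.symm x)) := by
  have hgu : ‖g u‖ = 1 := by rw [g.norm_map, hu]
  rw [refl_apply hgu, refl_apply hu, map_sub, map_smul, g.apply_symm_apply]
  congr 2
  rw [← g.inner_map_map u (g.symm x), g.apply_symm_apply]

/-- the unit vector at angle θ in the (i,j) plane -/
def wv (i j : Fin n) (θ : ℝ) : Euc n := Real.cos θ • ee i + Real.sin θ • ee j

lemma wv_apply (i j : Fin n) (θ : ℝ) (l : Fin n) :
    wv i j θ l = (if l = i then Real.cos θ else 0) + (if l = j then Real.sin θ else 0) := by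
  simp [wv, PiLp.add_apply, PiLp.smul_apply, ee_apply]

lemma inner_wv {i j : Fin n} (hij : i ≠ j) (θ : ℝ) (x : Euc n) :
    ⟪wv i j θ, x⟫ = Real.cos θ * x i + Real.sin θ * x j := by
  rw [wv, inner_add_left, real_inner_smul_left, real_inner_smul_left, inner_ee, inner_ee]

lemma norm_wv {i j : Fin n} (hij : i ≠ j) (θ : ℝ) : ‖wv i j θ‖ = 1 := by
  have h : ⟪wv i j θ, wv i j θ⟫ = 1 := by
    rw [inner_wv hij, wv_apply, wv_apply]
    rw [if_pos rfl, if_neg hij.symm, if_neg hij, if_pos rfl]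
    have := Real.cos_sq_add_sin_sq θ
    nlinarith [this]
  have := real_inner_self_eq_norm_sq (wv i j θ)
  nlinarith [norm_nonneg (wv i j θ)]

/-- rotation by angle t in the (i,j) plane, as a product of two reflections -/
def rot (i j : Fin n) (t : ℝ) : Euc n ≃ₗᵢ[ℝ] Euc n :=
  (hypReflection (ee i)).trans (hypReflection (wv i j (t / 2)))

lemma rot_coord {i j : Fin n} (hij : i ≠ j) (t : ℝ) (x : Euc n) (l : Fin n) :
    rot i j t x l = if l = i then Real.cos t * x i - Real.sin t * x j
      else if l = j then Real.sin t * x i + Real.cos t * x j else x l := by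
  have hw : ‖wv i j (t / 2)‖ = 1 := norm_wv hij _
  have hyl : ∀ l' : Fin n, hypReflection (ee i) x l'
      = x l' - 2 * x i * (if l' = i then 1 else 0) := by
    intro l'
    rw [refl_coord (norm_ee i), inner_ee, ee_apply]
  have hrot : rot i j t x l
      = hypReflection (wv i j (t / 2)) (hypReflection (ee i) x) l := rfl
  rw [hrot, refl_coord hw, inner_wv hij, wv_apply, hyl l, hyl i, hyl j]
  rw [if_pos rfl, if_neg hij.symm]
  have hct : Real.cos t = 2 * Real.cos (t / 2) ^ 2 - 1 := by
    have h := Real.cos_two_mul (t / 2)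
    rwa [show 2 * (t / 2) = t by ring] at h
  have hst : Real.sin t = 2 * Real.sin (t / 2) * Real.cos (t / 2) := by
    have h := Real.sin_two_mul (t / 2)
    rwa [show 2 * (t / 2) = t by ring] at h
  have hpy := Real.sin_sq_add_cos_sq (t / 2)
  rw [hct, hst]
  have hji : j ≠ i := Ne.symm hij
  by_cases h1 : l = i
  · subst h1
    simp only [eq_self_iff_true, if_true, hij, if_false]
    ring
  · by_cases h2 : l = j
    · rw [h2]
      simp only [eq_self_iff_true, if_true, hji, if_false]
      linear_combination (-2 * x j) * hpy
    · simp only [h1, h2, if_false]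
      ring

lemma rot_congr {i j : Fin n} (hij : i ≠ j) {t s : ℝ} (hc : Real.cos t = Real.cos s)
    (hs : Real.sin t = Real.sin s) : rot i j t = rot i j s := by
  ext1 x
  refine PiLp.ext fun l => ?_
  rw [rot_coord hij, rot_coord hij, hc, hs]

lemma rot_mul {i j : Fin n} (hij : i ≠ j) (t s : ℝ) :
    rot i j t * rot i j s = rot i j (t + s) := by
  ext1 x
  refine PiLp.ext fun l => ?_
  have hcoe : (rot i j t * rot i j s) x = rot i j t (rot i j s x) := rfl
  have hji : j ≠ i := Ne.symm hij
  by_cases h1 : l = i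
  · rw [hcoe, h1]
    simp only [rot_coord hij, eq_self_iff_true, if_true, hij, hji, if_false,
      Real.cos_add, Real.sin_add]
    ring
  · by_cases h2 : l = j
    · rw [hcoe, h2]
      simp only [rot_coord hij, eq_self_iff_true, if_true, hij, hji, if_false,
        Real.cos_add, Real.sin_add]
      ring
    · simp only [hcoe, rot_coord hij, h1, h2, if_false]

lemma rot_zero {i j : Fin n} (hij : i ≠ j) : rot i j 0 = 1 := by
  ext1 x
  refine PiLp.ext fun l => ?_
  have h1 : (1 : Euc n ≃ₗᵢ[ℝ] Euc n) x = x := rfl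
  rw [rot_coord hij, h1, Real.cos_zero, Real.sin_zero]
  split_ifs with ha hb
  · subst ha; ring
  · subst hb; ring
  · rfl

lemma rot_pow {i j : Fin n} (hij : i ≠ j) (t : ℝ) (k : ℕ) :
    (rot i j t) ^ k = rot i j (k * t) := by
  induction k with
  | zero => simpa using (rot_zero hij).symm
  | succ k ih =>
    rw [pow_succ, ih, rot_mul hij]
    congr 1
    push_cast
    ring

lemma rot_inv {i j : Fin n} (hij : i ≠ j) (t : ℝ) :
    (rot i j t)⁻¹ = rot i j (-t) := by
  refine inv_eq_of_mul_eq_one_right ?_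
  rw [rot_mul hij, add_neg_cancel, rot_zero hij]

lemma rot_zpow {i j : Fin n} (hij : i ≠ j) (t : ℝ) (k : ℤ) :
    (rot i j t) ^ k = rot i j (k * t) := by
  induction k using Int.induction_on with
  | zero => rw [zpow_zero, show ((0 : ℤ) : ℝ) * t = 0 by norm_num, rot_zero hij]
  | succ k ih =>
    rw [zpow_add_one, ih, rot_mul hij]
    congr 1
    push_cast
    ring
  | pred k ih =>
    rw [zpow_sub_one, ih, rot_inv hij, rot_mul hij]
    congr 1
    push_cast
    ring

lemma rot_symm_apply {i j : Fin n} (hij : i ≠ j) (t : ℝ) (x : Euc n) :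
    (rot i j t).symm x = rot i j (-t) x := by
  have h : rot i j t (rot i j (-t) x) = x := by
    have hcoe : (rot i j t * rot i j (-t)) x = rot i j t (rot i j (-t) x) := rfl
    rw [← hcoe, rot_mul hij, add_neg_cancel, rot_zero hij]
    rfl
  apply (rot i j t).injective
  rw [(rot i j t).apply_symm_apply, h]

/-- Lipschitz dependence of the rotation on the angle. -/
lemma abs_cos_sub_cos_le (a b : ℝ) : |Real.cos a - Real.cos b| ≤ |a - b| := by
  rw [Real.cos_sub_cos]
  have h1 : |Real.sin ((a + b) / 2)| ≤ 1 := Real.abs_sin_le_one _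
  have h2 : |Real.sin ((a - b) / 2)| ≤ |(a - b) / 2| := Real.abs_sin_le_abs
  rw [abs_mul, abs_mul]
  have h3 : |(a - b) / 2| = |a - b| / 2 := by rw [abs_div]; norm_num
  rw [h3] at h2
  have h4 : |(-2 : ℝ)| = 2 := by norm_num
  rw [h4]
  nlinarith [abs_nonneg (Real.sin ((a + b) / 2)), abs_nonneg (Real.sin ((a - b) / 2)),
    abs_nonneg (a - b)]

lemma abs_sin_sub_sin_le (a b : ℝ) : |Real.sin a - Real.sin b| ≤ |a - b| := by
  rw [Real.sin_sub_sin]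
  have h1 : |Real.cos ((a + b) / 2)| ≤ 1 := Real.abs_cos_le_one _
  have h2 : |Real.sin ((a - b) / 2)| ≤ |(a - b) / 2| := Real.abs_sin_le_abs
  rw [abs_mul, abs_mul]
  have h3 : |(a - b) / 2| = |a - b| / 2 := by rw [abs_div]; norm_num
  rw [h3] at h2
  have h4 : |(2 : ℝ)| = 2 := by norm_num
  rw [h4]
  nlinarith [abs_nonneg (Real.sin ((a - b) / 2)), abs_nonneg (Real.cos ((a + b) / 2)),
    abs_nonneg (a - b)]

lemma norm_le_two_coord {i j : Fin n} (hij : i ≠ j) (y : Euc n)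
    (hy : ∀ l, l ≠ i → l ≠ j → y l = 0) : ‖y‖ ≤ |y i| + |y j| := by
  have hdec : y = y i • ee i + y j • ee j := by
    refine PiLp.ext fun l => ?_
    have h : (y i • ee i + y j • ee j) l = y i * ee i l + y j * ee j l := rfl
    rw [h, ee_apply, ee_apply]
    by_cases h1 : l = i
    · subst h1; rw [if_pos rfl, if_neg hij]; ring
    · by_cases h2 : l = j
      · subst h2; rw [if_neg h1, if_pos rfl]; ring
      · rw [if_neg h1, if_neg h2, hy l h1 h2]; ring
  calc ‖y‖ = ‖y i • ee i + y j • ee j‖ := by rw [← hdec]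
    _ ≤ ‖y i • ee i‖ + ‖y j • ee j‖ := norm_add_le _ _
    _ = |y i| + |y j| := by
        rw [norm_smul, norm_smul, norm_ee, norm_ee, Real.norm_eq_abs, Real.norm_eq_abs]
        ring

lemma rot_lip {i j : Fin n} (hij : i ≠ j) (t s : ℝ) {x : Euc n} (hx : ‖x‖ ≤ 1) :
    ‖rot i j t x - rot i j s x‖ ≤ 4 * |t - s| := by
  set y := rot i j t x - rot i j s x with hy
  have hyl : ∀ l : Fin n, y l = rot i j t x l - rot i j s x l := fun l => rfl
  have hxi : |x i| ≤ 1 := le_trans (coord_le_norm x i) hx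
  have hxj : |x j| ≤ 1 := le_trans (coord_le_norm x j) hx
  have hc := abs_cos_sub_cos_le t s
  have hs := abs_sin_sub_sin_le t s
  have h0 : ∀ l, l ≠ i → l ≠ j → y l = 0 := by
    intro l h1 h2
    rw [hyl, rot_coord hij, rot_coord hij, if_neg h1, if_neg h2, if_neg h1, if_neg h2, sub_self]
  have hi : |y i| ≤ 2 * |t - s| := by
    rw [hyl, rot_coord hij, rot_coord hij, if_pos rfl, if_pos rfl]
    have heq : Real.cos t * x i - Real.sin t * x j - (Real.cos s * x i - Real.sin s * x j)
        = (Real.cos t - Real.cos s) * x i - (Real.sin t - Real.sin s) * x j := by ring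
    rw [heq]
    calc |(Real.cos t - Real.cos s) * x i - (Real.sin t - Real.sin s) * x j|
        ≤ |(Real.cos t - Real.cos s) * x i| + |(Real.sin t - Real.sin s) * x j| :=
          abs_sub _ _
      _ ≤ 2 * |t - s| := by
          rw [abs_mul, abs_mul]
          nlinarith [abs_nonneg (Real.cos t - Real.cos s), abs_nonneg (Real.sin t - Real.sin s),
            abs_nonneg (x i), abs_nonneg (x j), abs_nonneg (t - s)]
  have hj : |y j| ≤ 2 * |t - s| := by
    rw [hyl, rot_coord hij, rot_coord hij, if_neg hij.symm, if_pos rfl, if_neg hij.symm,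
      if_pos rfl]
    have heq : Real.sin t * x i + Real.cos t * x j - (Real.sin s * x i + Real.cos s * x j)
        = (Real.sin t - Real.sin s) * x i + (Real.cos t - Real.cos s) * x j := by ring
    rw [heq]
    calc |(Real.sin t - Real.sin s) * x i + (Real.cos t - Real.cos s) * x j|
        ≤ |(Real.sin t - Real.sin s) * x i| + |(Real.cos t - Real.cos s) * x j| :=
          abs_add_le _ _
      _ ≤ 2 * |t - s| := by
          rw [abs_mul, abs_mul]
          nlinarith [abs_nonneg (Real.cos t - Real.cos s), abs_nonneg (Real.sin t - Real.sin s),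
            abs_nonneg (x i), abs_nonneg (x j), abs_nonneg (t - s)]
  calc ‖y‖ ≤ |y i| + |y j| := norm_le_two_coord hij y h0
    _ ≤ 4 * |t - s| := by linarith

/-- Density of {2k + 2πl}. -/
lemma dense_angles (t ε : ℝ) (hε : 0 < ε) : ∃ k l : ℤ, |(k * 2 + l * (2 * π)) - t| < ε := by
  have hd : Dense ((AddSubgroup.closure {(2 : ℝ), 2 * π} : AddSubgroup ℝ) : Set ℝ) := by
    rcases (AddSubgroup.closure {(2 : ℝ), 2 * π}).dense_or_cyclic with h | ⟨a, ha⟩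
    · exact h
    · exfalso
      have h2 : (2 : ℝ) ∈ AddSubgroup.closure {(2 : ℝ), 2 * π} :=
        AddSubgroup.subset_closure (by simp)
      have h2pi : (2 * π : ℝ) ∈ AddSubgroup.closure {(2 : ℝ), 2 * π} :=
        AddSubgroup.subset_closure (by simp)
      rw [ha, AddSubgroup.mem_closure_singleton] at h2 h2pi
      obtain ⟨p, hp⟩ := h2
      obtain ⟨q, hq⟩ := h2pi
      rw [zsmul_eq_mul] at hp hq
      have hp0 : (p : ℝ) ≠ 0 := by
        intro h
        rw [h, zero_mul] at hp
        norm_num at hp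
      have ha0 : a ≠ 0 := by
        intro h
        rw [h, mul_zero] at hp
        norm_num at hp
      have hπ : π = (q : ℝ) / (p : ℝ) := by
        have key : π * (p : ℝ) = (q : ℝ) := by
          linear_combination (-(p : ℝ) / 2) * hq + ((q : ℝ) / 2) * hp
        rw [eq_div_iff hp0, key]
      exact irrational_pi ⟨(q : ℚ) / (p : ℚ), by push_cast; rw [hπ]⟩
  have hmem := hd t
  rw [Metric.mem_closure_iff] at hmem
  obtain ⟨b, hb, hdist⟩ := hmem ε hε
  obtain ⟨k, l, hkl⟩ := AddSubgroup.mem_closure_pair.mp hb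
  refine ⟨k, l, ?_⟩
  rw [zsmul_eq_mul, zsmul_eq_mul] at hkl
  rw [hkl]
  rw [Real.dist_eq, abs_sub_comm] at hdist
  exact hdist

/-- `U` is approximable by elements of `G`, uniformly on the unit ball. -/
def A (G : Subgroup (Euc n ≃ₗᵢ[ℝ] Euc n)) (U : Euc n ≃ₗᵢ[ℝ] Euc n) : Prop :=
  ∀ ε : ℝ, 0 < ε → ∃ W ∈ G, ∀ x : Euc n, ‖x‖ ≤ 1 → ‖U x - W x‖ < ε

lemma A_of_mem {G : Subgroup (Euc n ≃ₗᵢ[ℝ] Euc n)} {U : Euc n ≃ₗᵢ[ℝ] Euc n}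
    (h : U ∈ G) : A G U := fun ε hε => ⟨U, h, fun x _ => by simpa using hε⟩

lemma A_mul {G : Subgroup (Euc n ≃ₗᵢ[ℝ] Euc n)} {U V : Euc n ≃ₗᵢ[ℝ] Euc n}
    (hU : A G U) (hV : A G V) : A G (U * V) := by
  intro ε hε
  obtain ⟨W1, hW1, h1⟩ := hU (ε / 2) (by linarith)
  obtain ⟨W2, hW2, h2⟩ := hV (ε / 2) (by linarith)
  refine ⟨W1 * W2, mul_mem hW1 hW2, fun x hx => ?_⟩
  have hcoe : (U * V) x = U (V x) := rfl
  have hcoe2 : (W1 * W2) x = W1 (W2 x) := rfl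
  rw [hcoe, hcoe2]
  have hW2x : ‖W2 x‖ ≤ 1 := by rw [W2.norm_map]; exact hx
  have key1 : ‖U (V x) - U (W2 x)‖ = ‖V x - W2 x‖ := by
    rw [← map_sub U, U.norm_map]
  calc ‖U (V x) - W1 (W2 x)‖
      ≤ ‖U (V x) - U (W2 x)‖ + ‖U (W2 x) - W1 (W2 x)‖ := by
        have := dist_triangle (U (V x)) (U (W2 x)) (W1 (W2 x))
        simpa [dist_eq_norm] using this
    _ < ε / 2 + ε / 2 := by
        have := h2 x hx
        have := h1 (W2 x) hW2x
        rw [key1]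
        exact add_lt_add (h2 x hx) (h1 (W2 x) hW2x)
    _ = ε := by ring

lemma sin_cos_exists (p q : ℝ) :
    ∃ t : ℝ, Real.cos t * Real.sqrt (p ^ 2 + q ^ 2) = p ∧
      Real.sin t * Real.sqrt (p ^ 2 + q ^ 2) = q := by
  rcases eq_or_ne (Real.sqrt (p ^ 2 + q ^ 2)) 0 with h | h
  · have hle : p ^ 2 + q ^ 2 ≤ 0 := Real.sqrt_eq_zero'.mp h
    have hp : p = 0 := by nlinarith [sq_nonneg p, sq_nonneg q]
    have hq : q = 0 := by nlinarith [sq_nonneg p, sq_nonneg q]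
    exact ⟨0, by rw [h, mul_zero, hp], by rw [h, mul_zero, hq]⟩
  · set ρ := Real.sqrt (p ^ 2 + q ^ 2) with hρ
    have hρ0 : 0 ≤ ρ := Real.sqrt_nonneg _
    have hρpos : 0 < ρ := lt_of_le_of_ne hρ0 (Ne.symm h)
    have hρsq : ρ ^ 2 = p ^ 2 + q ^ 2 := Real.sq_sqrt (by positivity)
    have hple : p ^ 2 ≤ ρ ^ 2 := by nlinarith [sq_nonneg q]
    have habs : |p / ρ| ≤ 1 := by
      rw [abs_div, abs_of_pos hρpos, div_le_one hρpos]
      have := abs_nonneg p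
      nlinarith [sq_abs p]
    have h1 : -1 ≤ p / ρ := by cases' abs_le.mp habs with h1 h2; exact h1
    have h2 : p / ρ ≤ 1 := by cases' abs_le.mp habs with h1' h2'; exact h2'
    have hcos : Real.cos (Real.arccos (p / ρ)) = p / ρ := Real.cos_arccos h1 h2
    have hsin : Real.sin (Real.arccos (p / ρ)) = |q| / ρ := by
      rw [Real.sin_arccos]
      have key : 1 - (p / ρ) ^ 2 = (q / ρ) ^ 2 := by
        field_simp
        nlinarith [hρsq]
      rw [key, Real.sqrt_sq_eq_abs, abs_div, abs_of_pos hρpos]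
    by_cases hq : 0 ≤ q
    · refine ⟨Real.arccos (p / ρ), ?_, ?_⟩
      · rw [hcos]; field_simp
      · rw [hsin, abs_of_nonneg hq]; field_simp
    · refine ⟨-Real.arccos (p / ρ), ?_, ?_⟩
      · rw [Real.cos_neg, hcos]; field_simp
      · rw [Real.sin_neg, hsin, abs_of_neg (by linarith)]; field_simp

lemma A_rot {G : Subgroup (Euc n ≃ₗᵢ[ℝ] Euc n)} {i j : Fin n} (hij : i ≠ j)
    (h1 : hypReflection (ee i) ∈ G) (h2 : hypReflection (wv i j 1) ∈ G) (t : ℝ) :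
    A G (rot i j t) := by
  intro ε hε
  obtain ⟨k, l, hkl⟩ := dense_angles t (ε / 8) (by linarith)
  have hmem : rot i j 2 ∈ G := by
    have heq : rot i j 2 = hypReflection (wv i j 1) * hypReflection (ee i) := by
      rw [rot, show (2 : ℝ) / 2 = 1 by norm_num]
      rfl
    rw [heq]
    exact mul_mem h2 h1
  refine ⟨rot i j 2 ^ k, zpow_mem hmem k, fun x hx => ?_⟩
  rw [rot_zpow hij]
  have hcongr : rot i j ((k : ℝ) * 2) = rot i j ((k : ℝ) * 2 + (l : ℝ) * (2 * π)) := by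
    refine rot_congr hij ?_ ?_
    · rw [Real.cos_add_int_mul_two_pi]
    · rw [Real.sin_add_int_mul_two_pi]
  rw [hcongr]
  have hlip := rot_lip hij t ((k : ℝ) * 2 + (l : ℝ) * (2 * π)) hx
  have habs : |t - ((k : ℝ) * 2 + (l : ℝ) * (2 * π))| < ε / 8 := by
    rw [abs_sub_comm]
    exact hkl
  calc ‖rot i j t x - rot i j ((k : ℝ) * 2 + (l : ℝ) * (2 * π)) x‖
      ≤ 4 * |t - ((k : ℝ) * 2 + (l : ℝ) * (2 * π))| := hlip
    _ < ε := by linarith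

lemma reach [NeZero n] {G : Subgroup (Euc n ≃ₗᵢ[ℝ] Euc n)} (hn2 : 2 ≤ n)
    (hA : ∀ j : Fin n, j ≠ 0 → ∀ t : ℝ, A G (rot 0 j t)) :
    ∀ k : ℕ, ∀ v : Euc n, ‖v‖ = 1 → (∀ j : Fin n, k < j.val → v j = 0) →
      ∃ U : Euc n ≃ₗᵢ[ℝ] Euc n, A G U ∧ U (ee 0) = v := by
  intro k
  induction k with
  | zero =>
    intro v hv hsupp
    have hdec : v = v 0 • ee (0 : Fin n) := by
      refine PiLp.ext fun l => ?_
      have h : (v 0 • ee (0 : Fin n)) l = v 0 * ee 0 l := rfl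
      rw [h, ee_apply]
      by_cases hl : l = 0
      · rw [hl, if_pos rfl, mul_one]
      · rw [if_neg hl, mul_zero]
        refine hsupp l ?_
        have : l.val ≠ 0 := fun hval => hl (Fin.ext hval)
        omega
    have habs : |v 0| = 1 := by
      rw [hdec, norm_smul, norm_ee, mul_one, Real.norm_eq_abs] at hv
      exact hv
    rcases abs_eq (by norm_num : (0:ℝ) ≤ 1) |>.mp habs with hv0 | hv0
    · refine ⟨1, A_of_mem (one_mem G), ?_⟩
      have h1 : (1 : Euc n ≃ₗᵢ[ℝ] Euc n) (ee 0) = ee (0 : Fin n) := rfl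
      rw [h1, hdec, hv0, one_smul]
    · set j1 : Fin n := ⟨1, by omega⟩ with hj1def
      have h0j1 : (0 : Fin n) ≠ j1 := by
        intro h
        have := congrArg Fin.val h
        simp [hj1def] at this
      refine ⟨rot 0 j1 π, hA j1 (Ne.symm h0j1) π, ?_⟩
      refine PiLp.ext fun l => ?_
      rw [rot_coord h0j1]
      have he0 : ee (0 : Fin n) (0 : Fin n) = 1 := by rw [ee_apply, if_pos rfl]
      have hej1 : ee (0 : Fin n) j1 = 0 := by rw [ee_apply, if_neg h0j1.symm]
      have hrhs : ∀ l' : Fin n, v l' = v 0 * ee (0 : Fin n) l' := by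
        intro l'
        conv_lhs => rw [hdec]
        rfl
      rw [he0, hej1, hrhs l, hv0, ee_apply]
      by_cases hl : l = 0
      · rw [if_pos hl, if_pos hl, Real.cos_pi, Real.sin_pi]
        ring
      · rw [if_neg hl, if_neg hl]
        by_cases hlj : l = j1
        · rw [if_pos hlj, Real.sin_pi, Real.cos_pi]
          ring
        · rw [if_neg hlj]
          ring
  | succ k ih =>
    intro v hv hsupp
    by_cases hkn : n ≤ k + 1
    · refine ih v hv fun j hj => absurd hj ?_
      have := j.isLt
      omega
    · push_neg at hkn
      set J : Fin n := ⟨k + 1, hkn⟩ with hJdef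
      have h0J : (0 : Fin n) ≠ J := by
        intro h
        have := congrArg Fin.val h
        simp [hJdef] at this
      obtain ⟨t, hct, hst⟩ := sin_cos_exists (v 0) (v J)
      set v'' := (rot (0 : Fin n) J t).symm v with hv''def
      have hv''norm : ‖v''‖ = 1 := by
        rw [hv''def, LinearIsometryEquiv.norm_map]
        exact hv
      have hv''coords : ∀ l : Fin n, v'' l = rot 0 J (-t) v l := fun l => by
        rw [hv''def, rot_symm_apply h0J]
      have hsupp'' : ∀ j : Fin n, k < j.val → v'' j = 0 := by
        intro j hj
        rw [hv''coords, rot_coord h0J]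
        by_cases hjJ : j = J
        · rw [if_neg (by rw [hjJ]; exact Ne.symm h0J), if_pos hjJ, hjJ,
            Real.sin_neg, Real.cos_neg]
          linear_combination Real.sin t * hct - Real.cos t * hst
        · have hj0 : j ≠ 0 := by
            intro h
            rw [h] at hj
            simp at hj
          rw [if_neg hj0, if_neg hjJ]
          refine hsupp j ?_
          have hval : j.val ≠ k + 1 := by
            intro h
            exact hjJ (Fin.ext (by rw [h, hJdef]))
          omega
      obtain ⟨U', hAU', hU'⟩ := ih v'' hv''norm hsupp''
      refine ⟨rot 0 J t * U', A_mul (hA J (Ne.symm h0J) t) hAU', ?_⟩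
      have hcoe : (rot 0 J t * U') (ee 0) = rot 0 J t (U' (ee 0)) := rfl
      rw [hcoe, hU', hv''def, LinearIsometryEquiv.apply_symm_apply]

lemma A_refl_unit [NeZero n] {G : Subgroup (Euc n ≃ₗᵢ[ℝ] Euc n)} (hn2 : 2 ≤ n)
    (hA : ∀ j : Fin n, j ≠ 0 → ∀ t : ℝ, A G (rot 0 j t))
    (hR0 : hypReflection (ee (0 : Fin n)) ∈ G) {v : Euc n} (hv : ‖v‖ = 1) :
    A G (hypReflection v) := by
  intro ε hε
  obtain ⟨U, hAU, hU⟩ := reach hn2 hA n v hv (fun j hj => absurd j.isLt (by omega))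
  obtain ⟨W, hW, hWapprox⟩ := hAU (ε / 8) (by linarith)
  set w := W (ee (0 : Fin n)) with hwdef
  have hw : ‖w‖ = 1 := by rw [hwdef, LinearIsometryEquiv.norm_map, norm_ee]
  have hwv : ‖v - w‖ < ε / 8 := by
    rw [← hU, hwdef]
    exact hWapprox (ee 0) (le_of_eq (norm_ee 0))
  refine ⟨W * hypReflection (ee 0) * W⁻¹,
    mul_mem (mul_mem hW hR0) (inv_mem hW), fun x hx => ?_⟩
  have hconj : (W * hypReflection (ee (0 : Fin n)) * W⁻¹) x = hypReflection w x := by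
    have h1 : (W * hypReflection (ee (0 : Fin n)) * W⁻¹) x
        = W (hypReflection (ee (0 : Fin n)) (W.symm x)) := rfl
    rw [h1, hwdef, refl_conj W (norm_ee 0) x]
  rw [hconj]
  calc ‖hypReflection v x - hypReflection w x‖ ≤ 4 * ‖v - w‖ := refl_lip hv hw hx
    _ < ε := by linarith

lemma A_prod {G : Subgroup (Euc n ≃ₗᵢ[ℝ] Euc n)}
    (href : ∀ v : Euc n, A G (Submodule.reflection (ℝ ∙ v)ᗮ)) (L : List (Euc n)) :
    A G ((L.map fun v => Submodule.reflection (ℝ ∙ v)ᗮ).prod) := by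
  induction L with
  | nil =>
    rw [List.map_nil, List.prod_nil]
    exact A_of_mem (one_mem G)
  | cons v L ih =>
    rw [List.map_cons, List.prod_cons]
    exact A_mul (href v) ih

lemma refl_zero_eq_one : (Submodule.reflection (ℝ ∙ (0 : Euc n))ᗮ : Euc n ≃ₗᵢ[ℝ] Euc n) = 1 := by
  ext1 x
  have hx : x ∈ (ℝ ∙ (0 : Euc n))ᗮ := by
    rw [Submodule.mem_orthogonal]
    intro u hu
    rw [Submodule.span_zero_singleton, Submodule.mem_bot] at hu
    rw [hu]
    exact inner_zero_left x
  have h1 : (1 : Euc n ≃ₗᵢ[ℝ] Euc n) x = x := rfl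
  rw [h1]
  exact Submodule.reflection_mem_subspace_eq_self hx

lemma refl_smul_eq (v : Euc n) (hv : v ≠ 0) :
    Submodule.reflection (ℝ ∙ v)ᗮ = hypReflection (‖v‖⁻¹ • v) := by
  rw [hypReflection]
  congr 2
  rw [Submodule.span_singleton_smul_eq]
  exact isUnit_iff_ne_zero.mpr (inv_ne_zero (norm_ne_zero_iff.mpr hv))

end Stmt15Aux

theorem stmt15 (n : ℕ) (hn : 1 ≤ n) :
    ∃ (m : ℕ) (u : Fin m → Euc n),
      (∀ i, ‖u i‖ = 1) ∧
      -- the subgroup generated by the reflections `R_{u i}` is dense in `O(n)`: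
      -- every linear isometry `U` of `ℝⁿ` is approximated, uniformly on the unit ball,
      -- by elements of this subgroup.
      ∀ (U : Euc n ≃ₗᵢ[ℝ] Euc n) (ε : ℝ), 0 < ε →
        ∃ W ∈ Subgroup.closure (Set.range fun i => hypReflection (u i)),
          ∀ x : Euc n, ‖x‖ ≤ 1 → ‖U x - W x‖ < ε := by
  haveI : NeZero n := ⟨by omega⟩
  classical
  refine ⟨n, fun i => if i = (0 : Fin n) then Stmt15Aux.ee 0 else Stmt15Aux.wv 0 i 1, ?_, ?_⟩
  · intro i
    show ‖if i = (0 : Fin n) then Stmt15Aux.ee 0 else Stmt15Aux.wv 0 i 1‖ = 1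
    by_cases hi : i = 0
    · rw [if_pos hi, Stmt15Aux.norm_ee]
    · rw [if_neg hi]
      exact Stmt15Aux.norm_wv (fun h => hi h.symm) 1
  · intro U ε hε
    set G := Subgroup.closure (Set.range fun i : Fin n =>
      hypReflection (if i = (0 : Fin n) then Stmt15Aux.ee 0 else Stmt15Aux.wv 0 i 1)) with hGdef
    have hR0 : hypReflection (Stmt15Aux.ee (0 : Fin n)) ∈ G := by
      refine Subgroup.subset_closure ⟨0, ?_⟩
      show hypReflection (if (0 : Fin n) = 0 then Stmt15Aux.ee 0 else Stmt15Aux.wv 0 0 1)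
        = hypReflection (Stmt15Aux.ee (0 : Fin n))
      rw [if_pos rfl]
    have hWj : ∀ j : Fin n, j ≠ 0 → hypReflection (Stmt15Aux.wv 0 j 1) ∈ G := by
      intro j hj
      refine Subgroup.subset_closure ⟨j, ?_⟩
      show hypReflection (if j = (0 : Fin n) then Stmt15Aux.ee 0 else Stmt15Aux.wv 0 j 1)
        = hypReflection (Stmt15Aux.wv 0 j 1)
      rw [if_neg hj]
    have hee0 : Stmt15Aux.ee (0 : Fin n) ≠ 0 := by
      intro h
      have h1 := Stmt15Aux.norm_ee (0 : Fin n)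
      rw [h, norm_zero] at h1
      norm_num at h1
    have href : ∀ v : Euc n, Stmt15Aux.A G (Submodule.reflection (ℝ ∙ v)ᗮ) := by
      intro v
      by_cases hv : v = 0
      · rw [hv, Stmt15Aux.refl_zero_eq_one]
        exact Stmt15Aux.A_of_mem (one_mem G)
      · by_cases hn2 : 2 ≤ n
        · rw [Stmt15Aux.refl_smul_eq v hv]
          exact Stmt15Aux.A_refl_unit hn2
            (fun j hj t => Stmt15Aux.A_rot (Ne.symm hj) hR0 (hWj j hj) t) hR0
            (norm_smul_inv_norm hv)
        · have hn1 : n = 1 := by omega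
          have hfr : Module.finrank ℝ (Euc n) = 1 := by
            have h := finrank_euclideanSpace_fin (𝕜 := ℝ) (n := n)
            rw [h, hn1]
          have h1 : (ℝ ∙ v) = ⊤ := by
            apply Submodule.eq_top_of_finrank_eq
            rw [finrank_span_singleton hv, hfr]
          have h2 : (ℝ ∙ Stmt15Aux.ee (0 : Fin n)) = ⊤ := by
            apply Submodule.eq_top_of_finrank_eq
            rw [finrank_span_singleton hee0, hfr]
          have heq : Submodule.reflection (ℝ ∙ v)ᗮ = hypReflection (Stmt15Aux.ee (0 : Fin n)) := by
            rw [hypReflection]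
            congr 2
            rw [h1, h2]
          rw [heq]
          exact Stmt15Aux.A_of_mem hR0
    obtain ⟨L, _, hprod⟩ := U.reflections_generate_dim
    have hAU : Stmt15Aux.A G U := hprod ▸ Stmt15Aux.A_prod href L
    obtain ⟨W, hWmem, happrox⟩ := hAU ε hε
    exact ⟨W, hWmem, happrox⟩

end
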